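/- If C is the unique maximally-consistent base with C ⊇ B (i.e., C is maximally-consistent, C ⊇ B, and every maximally-consistent base D with D ⊇ B equals C), then for every classical formula φ, ⊩_B φ if and only if ⊩_C φ. -/
import Mathlib


/-- A base rule: a pair of a finite set of premiss atoms and a conclusion atom. -/
structure BaseRule (At : Type) where
  prem : Finset At
  concl : At

/-- A base is a set of base rules. -/
abbrev Base (At : Type) := Set (BaseRule At)

/-- The closure of a base `B`: the least set of atoms closed under the rules of `B`. -/
inductive Closure {At : Type} (B : Base At) : At → Prop
  | step (r : BaseRule At) (hr : r ∈ B) (ih : ∀ q ∈ r.prem, Closure B q) :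
      Closure B r.concl

/-- Classical formulas: atoms, falsum and implication. -/
inductive CForm (At : Type) where
  | atom : At → CForm At
  | bot  : CForm At
  | imp  : CForm At → CForm At → CForm At

/-- Base-extension validity of a classical formula at a base. -/
def CValid {At : Type} : Base At → CForm At → Prop
  | B, .atom p  => Closure B p
  | B, .bot     => ∀ p : At, Closure B p
  | B, .imp φ ψ => ∀ C : Base At, B ⊆ C → CValid C φ → CValid C ψ

/-- Base-extension consequence: `Γ ⊩_B φ`. -/
def CCon {At : Type} (Γ : Set (CForm At)) (B : Base At) (φ : CForm At) : Prop :=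
  ∀ C : Base At, B ⊆ C → (∀ ψ ∈ Γ, CValid C ψ) → CValid C φ

/-- A base is inconsistent iff `⊥` is valid at it. -/
def CInconsistent {At : Type} (B : Base At) : Prop := CValid B CForm.bot

/-- A base is consistent iff it is not inconsistent. -/
def CConsistent {At : Type} (B : Base At) : Prop := ¬ CInconsistent B

/-- A base is maximally-consistent iff it is consistent and adding any missing
base rule makes it inconsistent. -/
def CMaxCon {At : Type} (B : Base At) : Prop :=
  CConsistent B ∧ ∀ δ : BaseRule At, δ ∈ B ∨ CInconsistent (insert δ B)

/- ----------------- auxiliary lemmas ----------------- -/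

lemma closureMono {At : Type} {B C : Base At} (h : B ⊆ C) {p : At}
    (hp : Closure B p) : Closure C p := by
  induction hp with
  | step r hr _ ih2 => exact .step r (h hr) ih2

lemma cvalid_mono {At : Type} : ∀ (φ : CForm At) {B C : Base At},
    B ⊆ C → CValid B φ → CValid C φ
  | .atom _, _, _, h, hv => closureMono h hv
  | .bot, _, _, h, hv => fun p => closureMono h (hv p)
  | .imp _ _, _, _, h, hv => fun D hD hφ => hv D (h.trans hD) hφ

lemma incon_valid {At : Type} : ∀ (φ : CForm At) {B : Base At},
    CInconsistent B → CValid B φ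
  | .atom p, _, h => h p
  | .bot, _, h => h
  | .imp _ ψ, _, h => fun _ hD _ => incon_valid ψ (fun p => closureMono hD (h p))

/-- The base of all rules that keep the atom set `S` closed. -/
def maxSet {At : Type} (S : Set At) : Base At :=
  {r | r.concl ∈ S ∨ ∃ q ∈ r.prem, q ∉ S}

lemma mem_of_mem_closureMaxSet {At : Type} {S : Set At} {p : At}
    (hp : Closure (maxSet S) p) : p ∈ S := by
  induction hp with
  | step r hr _ ih2 =>
    rcases hr with h | ⟨q, hq, hq'⟩
    · exact h
    · exact absurd (ih2 q hq) hq'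

lemma closureMaxSet {At : Type} {S : Set At} {p : At} :
    Closure (maxSet S) p ↔ p ∈ S := by
  refine ⟨mem_of_mem_closureMaxSet, fun hp => ?_⟩
  exact Closure.step ⟨∅, p⟩ (Or.inl hp) (by simp)

lemma subset_maxSet_closure {At : Type} (D : Base At) :
    D ⊆ maxSet {p | Closure D p} := by
  intro r hr
  by_cases h : ∀ q ∈ r.prem, Closure D q
  · exact Or.inl (Closure.step r hr h)
  · push_neg at h
    exact Or.inr h

lemma maxcon_maxSet {At : Type} {S : Set At} (hS : ∃ a, a ∉ S) :
    CMaxCon (maxSet S) := by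
  obtain ⟨a, ha⟩ := hS
  constructor
  · intro h
    exact ha (mem_of_mem_closureMaxSet (h a))
  · intro δ
    by_cases hδ : δ ∈ maxSet S
    · exact Or.inl hδ
    · refine Or.inr ?_
      simp only [maxSet, Set.mem_setOf_eq, not_or, not_exists, not_and, not_not] at hδ
      obtain ⟨hconcl, hprem⟩ := hδ
      have hsub : maxSet S ⊆ insert δ (maxSet S) := Set.subset_insert _ _
      -- the conclusion of δ is derivable in the extended base
      have hc : Closure (insert δ (maxSet S)) δ.concl := by
        refine Closure.step δ (Set.mem_insert _ _) (fun q hq => ?_)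
        exact closureMono hsub (closureMaxSet.mpr (hprem q hq))
      intro q
      by_cases hqS : q ∈ S
      · exact closureMono hsub (closureMaxSet.mpr hqS)
      · refine Closure.step ⟨{δ.concl}, q⟩ ?_ ?_
        · refine Set.mem_insert_iff.mpr (Or.inr (Or.inr ⟨δ.concl, ?_, hconcl⟩))
          simp
        · intro x hx
          simp only [Finset.mem_singleton] at hx
          exact hx ▸ hc

/-- a base with a unique maximally-consistent superset agrees with it. -/
theorem classical_unique_maxcon {At : Type} [Countable At] [Infinite At]
    (B C : Base At) (hC : CMaxCon C) (hBC : B ⊆ C)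
    (huniq : ∀ D : Base At, CMaxCon D → B ⊆ D → D = C) :
    ∀ φ : CForm At, CValid B φ ↔ CValid C φ := by
  -- every consistent superset of B is contained in C
  have key : ∀ D : Base At, B ⊆ D → CConsistent D → D ⊆ C := by
    intro D hBD hDcon
    have hne : ∃ a, a ∉ {p | Closure D p} := by
      by_contra h
      push_neg at h
      exact hDcon (fun p => h p)
    have hmax := maxcon_maxSet hne
    have heq := huniq _ hmax (hBD.trans (subset_maxSet_closure D))
    exact heq ▸ (subset_maxSet_closure D)
  -- closures of B and C coincide
  have hclos : ∀ p : At, Closure B p ↔ Closure C p := by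
    have hne : ∃ a, a ∉ {p | Closure B p} := by
      by_contra h
      push_neg at h
      exact hC.1 (fun p => closureMono hBC (h p))
    have heq := huniq _ (maxcon_maxSet hne) (subset_maxSet_closure B)
    intro p
    constructor
    · exact closureMono hBC
    · intro hp
      have := heq ▸ hp
      exact closureMaxSet.mp this
  -- the main induction, generalized over intermediate bases
  have main : ∀ φ : CForm At, ∀ D : Base At, B ⊆ D → D ⊆ C →
      (CValid D φ ↔ CValid C φ) := by
    intro φ
    induction φ with
    | atom p =>
      intro D hBD hDC
      constructor
      · exact fun h => closureMono hDC h
      · intro h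
        exact closureMono hBD ((hclos p).mpr h)
    | bot =>
      intro D hBD hDC
      constructor
      · exact fun h p => closureMono hDC (h p)
      · intro h p
        exact closureMono hBD ((hclos p).mpr (h p))
    | imp φ ψ ihφ ihψ =>
      intro D hBD hDC
      constructor
      · exact fun h => cvalid_mono _ hDC h
      · intro h D' hDD' hφ
        by_cases hcon : CConsistent D'
        · have hBD' : B ⊆ D' := hBD.trans hDD'
          have hD'C : D' ⊆ C := key D' hBD' hcon
          have hφC : CValid C φ := (ihφ D' hBD' hD'C).mp hφ
          have hψC : CValid C ψ := h C (subset_refl C) hφC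
          exact (ihψ D' hBD' hD'C).mpr hψC
        · rw [CConsistent, not_not] at hcon
          exact incon_valid ψ hcon
  exact fun φ => main φ B (subset_refl B) hBC
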